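/- arXiv:0806.3468 — 2 statements merged into one kernel-verified Lean document; each statement's English description precedes it below -/
import Mathlib

section
/- For real numbers x, α and natural numbers n ≥ 1, r ≥ 1, s ≥ 0, set R := nr + s and define Z(n,s) := (1/R) ∑_{j=0}^n C(R, j) (n!/(n-j)!) R^{n-j} α^j x^{n-j} evaluated at x = 1, i.e. Z(n,s) = (1/R) ∑_{j=0}^n C(R,j) (n!/(n-j)!) R^{n-j} α^j. Then the complete Bell polynomials satisfy A_n(s·Z(1,0), s·Z(2,0), ..., s·Z(n,0)) = s·Z(n,s) for all n ≥ 1 and s ≥ 1, where Z(m,0) uses R = mr. -/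
open Finset

/-- The exponential partial Bell polynomial `B_{n,k}(x₁,x₂,…)`, defined via the
generating function `∑_{n} B_{n,k} tⁿ/n! = (1/k!) (∑_{m≥1} x_m t^m/m!)^k`. -/
noncomputable def bellB (n k : ℕ) (x : ℕ → ℝ) : ℝ :=
  ((Nat.factorial n : ℝ) / (Nat.factorial k : ℝ)) *
    PowerSeries.coeff n
      ((PowerSeries.mk fun m => if m = 0 then 0 else x m / (Nat.factorial m : ℝ)) ^ k)

/-- The complete Bell polynomial `A_n(x₁,…,x_n) = ∑_{k=1}^n B_{n,k}`, `A₀ = 1`. -/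
noncomputable def bellA (n : ℕ) (x : ℕ → ℝ) : ℝ :=
  if n = 0 then 1 else ∑ k ∈ Finset.Icc 1 n, bellB n k x

/-- `Z(n,s) = (1/R) ∑_{j=0}^n C(R,j)·(n!/(n-j)!)·R^{n-j}·α^j`, `R = nr+s`. -/
noncomputable def Z17 (r : ℕ) (α : ℝ) (n s : ℕ) : ℝ :=
  (1 / ((n * r + s : ℕ) : ℝ)) *
    ∑ j ∈ Finset.range (n + 1),
      ((n * r + s).choose j : ℝ) * ((Nat.factorial n : ℝ) / (Nat.factorial (n - j) : ℝ)) *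
        ((n * r + s : ℕ) : ℝ) ^ (n - j) * α ^ j

namespace Stmt17Aux

open PowerSeries

/-- Composition `g ∘ w` of power series, for `w` with zero constant term. -/
noncomputable def comp (g w : ℝ⟦X⟧) : ℝ⟦X⟧ :=
  PowerSeries.mk fun n => ∑ k ∈ range (n + 1), coeff k g * coeff n (w ^ k)

lemma coeff_w_pow {w : ℝ⟦X⟧} (hw : constantCoeff w = 0) {n k : ℕ} (h : n < k) :
    coeff n (w ^ k) = 0 := by
  have h1 : (X : ℝ⟦X⟧) ^ k ∣ w ^ k :=
    pow_dvd_pow_of_dvd (PowerSeries.X_dvd_iff.mpr hw) k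
  exact (PowerSeries.X_pow_dvd_iff.mp h1) n h

lemma coeff_comp (g w : ℝ⟦X⟧) (n : ℕ) :
    coeff n (comp g w) = ∑ k ∈ range (n + 1), coeff k g * coeff n (w ^ k) :=
  coeff_mk _ _

lemma constantCoeff_comp (g w : ℝ⟦X⟧) :
    constantCoeff (comp g w) = constantCoeff g := by
  have := coeff_comp g w 0
  simp only [coeff_zero_eq_constantCoeff] at this ⊢
  simpa using this

/-- key reorganization lemma -/
lemma coeff_comp_mul {w : ℝ⟦X⟧} (hw : constantCoeff w = 0) (g A : ℝ⟦X⟧) (n : ℕ) :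
    coeff n (comp g w * A) = ∑ k ∈ range (n + 1), coeff k g * coeff n (w ^ k * A) := by
  rw [coeff_mul]
  have step : ∀ p ∈ antidiagonal n,
      coeff p.1 (comp g w) * coeff p.2 A =
      ∑ k ∈ range (n + 1), coeff k g * (coeff p.1 (w ^ k) * coeff p.2 A) := by
    intro p hp
    have hpn : p.1 + p.2 = n := Finset.HasAntidiagonal.mem_antidiagonal.mp hp
    rw [coeff_comp, sum_mul]
    calc ∑ k ∈ range (p.1 + 1), coeff k g * coeff p.1 (w ^ k) * coeff p.2 A
        = ∑ k ∈ range (p.1 + 1), coeff k g * (coeff p.1 (w ^ k) * coeff p.2 A) :=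
          Finset.sum_congr rfl fun k _ => by ring
      _ = ∑ k ∈ range (n + 1), coeff k g * (coeff p.1 (w ^ k) * coeff p.2 A) := by
          refine Finset.sum_subset (Finset.range_subset_range.mpr (by omega)) fun k hk hk2 => ?_
          have : p.1 < k := by simp only [mem_range] at hk2 hk; omega
          rw [coeff_w_pow hw this, zero_mul, mul_zero]
  rw [Finset.sum_congr rfl step, Finset.sum_comm]
  refine Finset.sum_congr rfl fun k _ => ?_
  rw [← Finset.mul_sum, coeff_mul]

lemma comp_mul {w : ℝ⟦X⟧} (hw : constantCoeff w = 0) (g h : ℝ⟦X⟧) :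
    comp (g * h) w = comp g w * comp h w := by
  ext n
  set F : ℕ → ℕ → ℝ := fun i j => coeff i g * coeff j h * coeff n (w ^ (i + j)) with hF
  have key : ∀ (i j : ℕ), n < i + j → F i j = 0 := by
    intro i j hij
    simp only [hF]
    rw [coeff_w_pow hw hij, mul_zero]
  have rhs_eq : coeff n (comp g w * comp h w) =
      ∑ k ∈ range (n + 1), ∑ j ∈ range (n + 1), F k j := by
    rw [coeff_comp_mul hw g (comp h w) n]
    refine Finset.sum_congr rfl fun k _ => ?_
    rw [mul_comm (w ^ k), coeff_comp_mul hw h (w ^ k) n, Finset.mul_sum]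
    refine Finset.sum_congr rfl fun j _ => ?_
    simp only [hF]
    rw [mul_comm (w ^ j) (w ^ k), ← pow_add]
    ring
  have lhs_eq : coeff n (comp (g * h) w) =
      ∑ p ∈ (range (n + 1)).sigma (fun m => antidiagonal m), F p.2.1 p.2.2 := by
    rw [coeff_comp, Finset.sum_sigma]
    refine Finset.sum_congr rfl fun m _ => ?_
    rw [coeff_mul, sum_mul]
    refine Finset.sum_congr rfl fun p hp => ?_
    have hpm : p.1 + p.2 = m := Finset.HasAntidiagonal.mem_antidiagonal.mp hp
    simp only [hF]
    rw [hpm]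
  rw [lhs_eq, rhs_eq, ← Finset.sum_product']
  have h1 : ∑ p ∈ (range (n + 1)).sigma (fun m => antidiagonal m), F p.2.1 p.2.2 =
      ∑ p ∈ (range (n + 1) ×ˢ range (n + 1)).filter (fun p => p.1 + p.2 ≤ n), F p.1 p.2 := by
    refine Finset.sum_nbij' (i := fun p => (p.2.1, p.2.2))
      (j := fun p => ⟨p.1 + p.2, (p.1, p.2)⟩) ?_ ?_ ?_ ?_ ?_
    · intro a ha
      simp only [Finset.mem_sigma, mem_range, Finset.HasAntidiagonal.mem_antidiagonal] at ha
      simp only [Finset.mem_filter, Finset.mem_product, mem_range]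
      omega
    · intro a ha
      simp only [Finset.mem_filter, Finset.mem_product, mem_range] at ha
      simp only [Finset.mem_sigma, mem_range, Finset.HasAntidiagonal.mem_antidiagonal]
      exact ⟨by omega, trivial⟩
    · intro a ha
      obtain ⟨m, i, j⟩ := a
      simp only [Finset.mem_sigma, mem_range, Finset.HasAntidiagonal.mem_antidiagonal] at ha
      simp [ha.2]
    · intro a _; rfl
    · intro a _; rfl
  rw [h1]
  refine Finset.sum_subset (Finset.filter_subset _ _) fun p hp hp2 => ?_
  refine key p.1 p.2 ?_
  simp only [Finset.mem_filter, hp, true_and, not_le] at hp2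
  exact hp2

lemma comp_pow {w : ℝ⟦X⟧} (hw : constantCoeff w = 0) (g : ℝ⟦X⟧) (k : ℕ) :
    comp (g ^ k) w = comp g w ^ k := by
  induction k with
  | zero =>
      simp only [pow_zero]
      ext n
      rw [coeff_comp]
      rcases Nat.eq_zero_or_pos n with h | h
      · subst h; simp
      · rw [Finset.sum_eq_single 0]
        · simp
        · intro b _ hb
          rw [PowerSeries.coeff_one, if_neg (by omega), zero_mul]
        · simp
  | succ k ih => rw [pow_succ, pow_succ, comp_mul hw, ih]

/-- coefficients of powers only depend on low coefficients -/
lemma coeff_pow_congr {f g : ℝ⟦X⟧} {n : ℕ} (h : ∀ i ≤ n, coeff i f = coeff i g) :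
    ∀ (k : ℕ) (m : ℕ), m ≤ n → coeff m (f ^ k) = coeff m (g ^ k) := by
  intro k
  induction k with
  | zero => intro m _; simp
  | succ k ih =>
      intro m hm
      rw [pow_succ, pow_succ, coeff_mul, coeff_mul]
      refine Finset.sum_congr rfl fun p hp => ?_
      have hpm : p.1 + p.2 = m := Finset.HasAntidiagonal.mem_antidiagonal.mp hp
      rw [ih p.1 (by omega), h p.2 (by omega)]

lemma coeff_comp_congr (Φ : ℝ⟦X⟧) {f g : ℝ⟦X⟧} {n : ℕ}
    (h : ∀ i ≤ n, coeff i f = coeff i g) :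
    coeff n (comp Φ f) = coeff n (comp Φ g) := by
  rw [coeff_comp, coeff_comp]
  exact Finset.sum_congr rfl fun k _ => by rw [coeff_pow_congr h k n le_rfl]

/-- one iteration step toward the fixed point `w = X * comp Φ w` -/
noncomputable def step (Φ f : ℝ⟦X⟧) : ℝ⟦X⟧ := X * comp Φ f

lemma constantCoeff_step (Φ f : ℝ⟦X⟧) : constantCoeff (step Φ f) = 0 := by
  simp [step]

/-- the fixed point series -/
noncomputable def wser (Φ : ℝ⟦X⟧) : ℝ⟦X⟧ :=
  PowerSeries.mk fun n => coeff n ((step Φ)^[n] 0)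

lemma coeff_iter_stable (Φ : ℝ⟦X⟧) :
    ∀ (i M N : ℕ), i ≤ M → i ≤ N →
      coeff i ((step Φ)^[M] 0) = coeff i ((step Φ)^[N] 0) := by
  intro i
  induction i using Nat.strong_induction_on with
  | _ i ih =>
      intro M N hM hN
      rcases Nat.eq_zero_or_pos i with rfl | hi
      · rcases Nat.eq_zero_or_pos M with rfl | hM' <;> rcases Nat.eq_zero_or_pos N with rfl | hN'
        · rfl
        · obtain ⟨N', rfl⟩ := Nat.exists_eq_succ_of_ne_zero (show N ≠ 0 by omega)
          rw [Function.iterate_succ_apply']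
          simp [coeff_zero_eq_constantCoeff, constantCoeff_step]
        · obtain ⟨M', rfl⟩ := Nat.exists_eq_succ_of_ne_zero (show M ≠ 0 by omega)
          rw [Function.iterate_succ_apply']
          simp [coeff_zero_eq_constantCoeff, constantCoeff_step]
        · obtain ⟨M', rfl⟩ := Nat.exists_eq_succ_of_ne_zero (show M ≠ 0 by omega)
          obtain ⟨N', rfl⟩ := Nat.exists_eq_succ_of_ne_zero (show N ≠ 0 by omega)
          rw [Function.iterate_succ_apply', Function.iterate_succ_apply']
          simp [coeff_zero_eq_constantCoeff, constantCoeff_step]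
      · obtain ⟨i', rfl⟩ := Nat.exists_eq_succ_of_ne_zero (show i ≠ 0 by omega)
        obtain ⟨M', rfl⟩ := Nat.exists_eq_succ_of_ne_zero (show M ≠ 0 by omega)
        obtain ⟨N', rfl⟩ := Nat.exists_eq_succ_of_ne_zero (show N ≠ 0 by omega)
        rw [Function.iterate_succ_apply', Function.iterate_succ_apply']
        show coeff (i' + 1) (X * comp Φ _) = coeff (i' + 1) (X * comp Φ _)
        rw [PowerSeries.coeff_succ_X_mul, PowerSeries.coeff_succ_X_mul]
        exact coeff_comp_congr Φ fun j hj => ih j (by omega) M' N' (by omega) (by omega)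

lemma coeff_wser_eq (Φ : ℝ⟦X⟧) (n N : ℕ) (hN : n ≤ N) :
    coeff n (wser Φ) = coeff n ((step Φ)^[N] 0) := by
  rw [wser, coeff_mk]
  exact coeff_iter_stable Φ n n N le_rfl hN

lemma constantCoeff_wser (Φ : ℝ⟦X⟧) : constantCoeff (wser Φ) = 0 := by
  rw [← coeff_zero_eq_constantCoeff_apply, coeff_wser_eq Φ 0 0 le_rfl]
  simp

/-- the functional equation -/
lemma wser_eq (Φ : ℝ⟦X⟧) : wser Φ = X * comp Φ (wser Φ) := by
  ext n
  rcases Nat.eq_zero_or_pos n with rfl | hn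
  · rw [coeff_zero_eq_constantCoeff_apply, coeff_zero_eq_constantCoeff_apply,
      constantCoeff_wser]
    simp
  · obtain ⟨i, rfl⟩ := Nat.exists_eq_succ_of_ne_zero (show n ≠ 0 by omega)
    rw [PowerSeries.coeff_succ_X_mul]
    rw [coeff_wser_eq Φ (i + 1) (i + 1) le_rfl, Function.iterate_succ_apply']
    show coeff (i + 1) (X * comp Φ _) = _
    rw [PowerSeries.coeff_succ_X_mul]
    exact coeff_comp_congr Φ fun j hj => (coeff_wser_eq Φ j i (by omega)).symm

lemma deriv_pow_succ (w : ℝ⟦X⟧) (k : ℕ) :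
    d⁄dX ℝ (w ^ (k + 1)) = C ((k : ℝ) + 1) * (w ^ k * d⁄dX ℝ w) := by
  have h := Derivation.leibniz_pow (PowerSeries.derivative ℝ) (a := w) (k + 1)
  simp only [Nat.add_sub_cancel, smul_eq_mul, nsmul_eq_mul] at h
  rw [show (((k + 1 : ℕ)) : ℝ⟦X⟧) = C (((k + 1 : ℕ)) : ℝ) from (map_natCast (C (R := ℝ)) (k+1)).symm] at h
  rw [h]
  push_cast
  ring

lemma deriv_mul (a b : ℝ⟦X⟧) :
    d⁄dX ℝ (a * b) = a * d⁄dX ℝ b + b * d⁄dX ℝ a := by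
  simpa [smul_eq_mul] using PowerSeries.derivativeFun_mul a b

/-- chain rule -/
lemma deriv_comp {w : ℝ⟦X⟧} (hw : constantCoeff w = 0) (g : ℝ⟦X⟧) :
    d⁄dX ℝ (comp g w) = comp (d⁄dX ℝ g) w * d⁄dX ℝ w := by
  ext n
  rw [PowerSeries.coeff_derivative, coeff_comp_mul hw]
  have hterm : ∀ k ∈ range (n + 1),
      coeff k (d⁄dX ℝ g) * coeff n (w ^ k * d⁄dX ℝ w) =
      ((n : ℝ) + 1) * (coeff (k + 1) g * coeff (n + 1) (w ^ (k + 1))) := by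
    intro k _
    have e1 : coeff n (d⁄dX ℝ (w ^ (k + 1))) = coeff (n + 1) (w ^ (k + 1)) * ((n : ℝ) + 1) := by
      rw [PowerSeries.coeff_derivative]
    have e2 : coeff n (d⁄dX ℝ (w ^ (k + 1))) = ((k : ℝ) + 1) * coeff n (w ^ k * d⁄dX ℝ w) := by
      rw [deriv_pow_succ, PowerSeries.coeff_C_mul]
    have e3 : ((k : ℝ) + 1) * coeff n (w ^ k * d⁄dX ℝ w) =
        coeff (n + 1) (w ^ (k + 1)) * ((n : ℝ) + 1) := by rw [← e2, e1]
    rw [PowerSeries.coeff_derivative g k]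
    calc coeff (k+1) g * ((k:ℝ) + 1) * coeff n (w ^ k * d⁄dX ℝ w)
        = coeff (k+1) g * (((k:ℝ) + 1) * coeff n (w ^ k * d⁄dX ℝ w)) := by ring
      _ = coeff (k+1) g * (coeff (n + 1) (w ^ (k + 1)) * ((n : ℝ) + 1)) := by rw [e3]
      _ = ((n : ℝ) + 1) * (coeff (k + 1) g * coeff (n + 1) (w ^ (k + 1))) := by ring
  rw [Finset.sum_congr rfl hterm, ← Finset.mul_sum, coeff_comp,
    Finset.sum_range_succ' (fun k => coeff k g * coeff (n + 1) (w ^ k)) (n + 1)]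
  have h0 : coeff 0 g * coeff (n + 1) ((w : ℝ⟦X⟧) ^ 0) = 0 := by
    rw [pow_zero, PowerSeries.coeff_one, if_neg (by omega), mul_zero]
  rw [h0, add_zero]
  ring

/-- core residue computation -/
lemma K1 {v : ℝ⟦X⟧} (hv : constantCoeff v = 1) (j : ℕ) :
    coeff (j + 1) (d⁄dX ℝ (X * v) * (v⁻¹) ^ (j + 2)) = 0 := by
  have hvu : v * v⁻¹ = 1 := PowerSeries.mul_inv_cancel v (by rw [hv]; exact one_ne_zero)
  have e : d⁄dX ℝ (X * v) * (v⁻¹) ^ (j + 2) =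
      (v⁻¹) ^ (j + 1) + X * (d⁄dX ℝ v * (v⁻¹) ^ (j + 2)) := by
    rw [deriv_mul X v, PowerSeries.derivative_X]
    have h2 : v * (v⁻¹) ^ (j + 2) = (v⁻¹) ^ (j + 1) := by
      calc v * (v⁻¹) ^ (j + 2) = (v * v⁻¹) * (v⁻¹) ^ (j + 1) := by ring
        _ = (v⁻¹) ^ (j + 1) := by rw [hvu, one_mul]
    calc (X * d⁄dX ℝ v + v * 1) * (v⁻¹) ^ (j + 2)
        = X * (d⁄dX ℝ v * (v⁻¹) ^ (j + 2)) + v * (v⁻¹) ^ (j + 2) := by ring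
      _ = _ := by rw [h2]; ring
  rw [e, map_add, PowerSeries.coeff_succ_X_mul]
  have hA2 : d⁄dX ℝ ((v⁻¹) ^ (j + 1)) = C (-((j : ℝ) + 1)) * (d⁄dX ℝ v * (v⁻¹) ^ (j + 2)) := by
    rw [deriv_pow_succ (v⁻¹) j, PowerSeries.derivative_inv', map_neg]
    ring
  have hA : coeff j (d⁄dX ℝ ((v⁻¹) ^ (j + 1))) = ((j : ℝ) + 1) * coeff (j + 1) ((v⁻¹) ^ (j + 1)) := by
    rw [PowerSeries.coeff_derivative]; ring
  rw [hA2, PowerSeries.coeff_C_mul] at hA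
  have hj : ((j : ℝ) + 1) ≠ 0 := by positivity
  have hkey : ((j : ℝ) + 1) *
      (coeff (j + 1) ((v⁻¹) ^ (j + 1)) + coeff j (d⁄dX ℝ v * (v⁻¹) ^ (j + 2))) = 0 := by
    linarith [hA]
  rcases mul_eq_zero.mp hkey with h | h
  · exact absurd h hj
  · exact h

lemma coeff_Xpow_mul (f : ℝ⟦X⟧) (m d : ℕ) : coeff (d + m) (X ^ m * f) = coeff d f := by
  simpa [mul_comm] using PowerSeries.coeff_X_pow_mul f m d

lemma K2 {v : ℝ⟦X⟧} (hv : constantCoeff v = 1) (Q : ℝ⟦X⟧) (n : ℕ) :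
    coeff n (comp Q (X * v) * (d⁄dX ℝ (X * v) * (v⁻¹) ^ (n + 1))) = coeff n Q := by
  have hw : constantCoeff (X * v) = 0 := by simp
  have hvu : v * v⁻¹ = 1 := PowerSeries.mul_inv_cancel v (by rw [hv]; exact one_ne_zero)
  have hu0 : constantCoeff (v⁻¹) = 1 := by
    have := congrArg (constantCoeff) hvu
    simp only [map_mul, map_one, hv, one_mul] at this
    exact this
  have hdw0 : constantCoeff (d⁄dX ℝ (X * v)) = 1 := by
    rw [deriv_mul X v, PowerSeries.derivative_X, map_add, map_mul, map_mul]
    simp [hv]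
  rw [coeff_comp_mul hw]
  rw [Finset.sum_eq_single n]
  · -- main term m = n
    have hmain : coeff n ((X * v) ^ n * (d⁄dX ℝ (X * v) * (v⁻¹) ^ (n + 1))) = 1 := by
      rw [mul_pow, mul_assoc, PowerSeries.coeff_X_pow_mul', if_pos le_rfl, Nat.sub_self]
      rw [coeff_zero_eq_constantCoeff_apply]
      rw [map_mul, map_mul, map_pow, map_pow, hv, hu0, hdw0]
      norm_num
    rw [hmain, mul_one]
  · intro m hm hmn
    have hmlt : m < n := by simp only [mem_range] at hm; omega
    obtain ⟨j, hj⟩ : ∃ j, n = m + (j + 1) := ⟨n - m - 1, by omega⟩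
    have hsplit : (X * v) ^ m * (d⁄dX ℝ (X * v) * (v⁻¹) ^ (n + 1)) =
        X ^ m * (d⁄dX ℝ (X * v) * (v⁻¹) ^ (j + 2)) := by
      rw [mul_pow]
      have hvm : v ^ m * (v⁻¹) ^ (n + 1) = (v⁻¹) ^ (j + 2) := by
        have : (v * v⁻¹) ^ m = 1 := by rw [hvu, one_pow]
        calc v ^ m * (v⁻¹) ^ (n + 1) = (v * v⁻¹) ^ m * (v⁻¹) ^ (n + 1 - m) := by
              rw [mul_pow, mul_assoc, ← pow_add]
              congr 2
              omega
          _ = (v⁻¹) ^ (j + 2) := by rw [this, one_mul]; congr 1; omega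
      calc X ^ m * v ^ m * (d⁄dX ℝ (X * v) * (v⁻¹) ^ (n + 1))
          = X ^ m * (d⁄dX ℝ (X * v) * (v ^ m * (v⁻¹) ^ (n + 1))) := by ring
        _ = _ := by rw [hvm]
    rw [hsplit, hj, show m + (j + 1) = (j + 1) + m by omega, coeff_Xpow_mul, K1 hv j, mul_zero]
  · intro h
    exact absurd (Finset.self_mem_range_succ n) h

/-- Lagrange inversion -/
lemma K3 {Φ : ℝ⟦X⟧} (hΦ : constantCoeff Φ = 1) (H : ℝ⟦X⟧) (n : ℕ) :
    ((n : ℝ) + 1) * coeff (n + 1) (comp H (wser Φ)) =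
      coeff n (d⁄dX ℝ H * Φ ^ (n + 1)) := by
  have hw : constantCoeff (wser Φ) = 0 := constantCoeff_wser Φ
  have hv : constantCoeff (comp Φ (wser Φ)) = 1 := by rw [constantCoeff_comp]; exact hΦ
  have hvu : comp Φ (wser Φ) * (comp Φ (wser Φ))⁻¹ = 1 :=
    PowerSeries.mul_inv_cancel _ (by rw [hv]; exact one_ne_zero)
  have step1 : ((n : ℝ) + 1) * coeff (n + 1) (comp H (wser Φ)) =
      coeff n (d⁄dX ℝ (comp H (wser Φ))) := by
    rw [PowerSeries.coeff_derivative]; ring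
  rw [step1, deriv_comp hw]
  have ins : comp (d⁄dX ℝ H) (wser Φ) * d⁄dX ℝ (wser Φ) =
      comp (d⁄dX ℝ H * Φ ^ (n + 1)) (wser Φ) *
        (d⁄dX ℝ (wser Φ) * ((comp Φ (wser Φ))⁻¹) ^ (n + 1)) := by
    rw [comp_mul hw, comp_pow hw]
    have h1 : (comp Φ (wser Φ)) ^ (n + 1) * ((comp Φ (wser Φ))⁻¹) ^ (n + 1) = 1 := by
      rw [← mul_pow, hvu, one_pow]
    calc comp (d⁄dX ℝ H) (wser Φ) * d⁄dX ℝ (wser Φ)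
        = comp (d⁄dX ℝ H) (wser Φ) * d⁄dX ℝ (wser Φ) *
            ((comp Φ (wser Φ)) ^ (n + 1) * ((comp Φ (wser Φ))⁻¹) ^ (n + 1)) := by
          rw [h1, mul_one]
      _ = _ := by ring
  rw [ins]
  set v := comp Φ (wser Φ) with hvdef
  rw [show wser Φ = X * v from wser_eq Φ]
  exact K2 hv (d⁄dX ℝ H * Φ ^ (n + 1)) n

/-- uniqueness for the formal ODE y' = D y -/
lemma ode_unique {D p q : ℝ⟦X⟧} (hp : d⁄dX ℝ p = D * p) (hq : d⁄dX ℝ q = D * q)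
    (h0 : constantCoeff p = constantCoeff q) : p = q := by
  ext n
  induction n using Nat.strong_induction_on with
  | _ n ih =>
    match n with
    | 0 => simpa [coeff_zero_eq_constantCoeff_apply] using h0
    | (n + 1) =>
      have hsum : coeff n (D * p) = coeff n (D * q) := by
        rw [coeff_mul, coeff_mul]
        refine Finset.sum_congr rfl fun ab hab => ?_
        have hab' := Finset.HasAntidiagonal.mem_antidiagonal.mp hab
        rw [ih ab.2 (by omega)]
      have heq : coeff (n + 1) p * ((n : ℝ) + 1) = coeff (n + 1) q * ((n : ℝ) + 1) := by
        have l1 : coeff n (d⁄dX ℝ p) = coeff n (d⁄dX ℝ q) := by rw [hp, hq]; exact hsum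
        rw [PowerSeries.coeff_derivative, PowerSeries.coeff_derivative] at l1
        push_cast at l1
        exact l1
      have hne : ((n : ℝ) + 1) ≠ 0 := by positivity
      exact mul_right_cancel₀ hne heq

noncomputable def Eexp : ℝ⟦X⟧ := PowerSeries.mk fun n => ((n.factorial : ℝ))⁻¹

@[simp] lemma coeff_Eexp (n : ℕ) : coeff n Eexp = ((n.factorial : ℝ))⁻¹ := coeff_mk _ _

lemma constantCoeff_Eexp : constantCoeff Eexp = 1 := by
  rw [← coeff_zero_eq_constantCoeff_apply, coeff_Eexp]; norm_num

lemma deriv_Eexp : d⁄dX ℝ Eexp = Eexp := by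
  ext n
  rw [PowerSeries.coeff_derivative, coeff_Eexp, coeff_Eexp, Nat.factorial_succ]
  have h1 : ((n.factorial : ℝ)) ≠ 0 := by positivity
  have h2 : ((n : ℝ) + 1) ≠ 0 := by positivity
  push_cast
  field_simp

noncomputable def Fser (α : ℝ) : ℝ⟦X⟧ := (1 + C α * X) * Eexp

lemma constantCoeff_Fser (α : ℝ) : constantCoeff (Fser α) = 1 := by
  rw [Fser, map_mul, map_add, map_one, map_mul, constantCoeff_X, constantCoeff_Eexp,
    mul_zero, add_zero, one_mul]

lemma coeff_Eexp_pow (N n : ℕ) : coeff n (Eexp ^ N) = (N : ℝ) ^ n / (n.factorial : ℝ) := by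
  induction N generalizing n with
  | zero =>
      rw [pow_zero, PowerSeries.coeff_one]
      rcases Nat.eq_zero_or_pos n with rfl | hn
      · norm_num
      · rw [if_neg (by omega)]
        rw [Nat.cast_zero, zero_pow (by omega), zero_div]
  | succ N ih =>
      rw [pow_succ, coeff_mul, Finset.Nat.sum_antidiagonal_eq_sum_range_succ_mk]
      have hterm : ∀ j ∈ range (n + 1),
          coeff j (Eexp ^ N) * coeff (n - j) Eexp =
          (N : ℝ) ^ j * (n.choose j : ℝ) / (n.factorial : ℝ) := by
        intro j hj
        have hjn : j ≤ n := by simp only [mem_range] at hj; omega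
        rw [ih j, coeff_Eexp]
        rw [Nat.cast_choose ℝ hjn]
        have h1 : ((j.factorial : ℝ)) ≠ 0 := by positivity
        have h2 : (((n - j).factorial : ℝ)) ≠ 0 := by positivity
        field_simp
      rw [Finset.sum_congr rfl hterm, ← Finset.sum_div]
      congr 1
      have := add_pow (N : ℝ) 1 n
      simp only [one_pow, mul_one] at this
      rw [← this]
      push_cast
      ring

lemma coeff_F_pow (α : ℝ) (N n : ℕ) :
    coeff n (Fser α ^ N) =
      ∑ j ∈ range (n + 1), (N.choose j : ℝ) * α ^ j * (N : ℝ) ^ (n - j) / ((n - j).factorial : ℝ) := by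
  rw [Fser, mul_pow, coeff_mul, Finset.Nat.sum_antidiagonal_eq_sum_range_succ_mk]
  refine Finset.sum_congr rfl fun j hj => ?_
  rw [coeff_Eexp_pow]
  have hcoeff : coeff j ((1 + C α * X) ^ N) = (N.choose j : ℝ) * α ^ j := by
    rw [show (1 + C α * X) = (C α * X + 1) from by ring, add_pow, map_sum]
    have hterm : ∀ k ∈ range (N + 1),
        coeff j ((C α * X) ^ k * 1 ^ (N - k) * ((N.choose k : ℕ) : ℝ⟦X⟧)) =
        if j = k then (N.choose k : ℝ) * α ^ k else 0 := by
      intro k _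
      rw [one_pow, mul_one, mul_pow, ← map_pow]
      rw [show (((N.choose k : ℕ)) : ℝ⟦X⟧) = C ((N.choose k : ℕ) : ℝ) from
        (map_natCast (C (R := ℝ)) _).symm]
      rw [show C (α ^ k) * X ^ k * C ((N.choose k : ℕ) : ℝ) =
        C (α ^ k) * C ((N.choose k : ℕ) : ℝ) * X ^ k from by ring, ← map_mul,
        PowerSeries.coeff_C_mul, PowerSeries.coeff_X_pow]
      rw [mul_ite, mul_one, mul_zero]
      by_cases hjk : j = k
      · rw [if_pos hjk, if_pos hjk]; ring
      · rw [if_neg hjk, if_neg hjk]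
    rw [Finset.sum_congr rfl hterm, Finset.sum_ite_eq]
    by_cases hjN : j ≤ N
    · rw [if_pos (by simp only [mem_range]; omega)]
    · rw [if_neg (by simp only [mem_range]; omega), Nat.choose_eq_zero_of_lt (by omega)]
      norm_num
  rw [hcoeff]
  ring

/-- `Λ = X + log(1 + αX)` -/
noncomputable def Lam (α : ℝ) : ℝ⟦X⟧ :=
  PowerSeries.mk fun k => if k = 0 then 0 else (if k = 1 then 1 else 0) + -(-α) ^ k / k

lemma constantCoeff_Lam (α : ℝ) : constantCoeff (Lam α) = 0 := by
  rw [← coeff_zero_eq_constantCoeff_apply, Lam, coeff_mk, if_pos rfl]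

lemma coeff_deriv_Lam (α : ℝ) (n : ℕ) :
    coeff n (d⁄dX ℝ (Lam α)) = (if n = 0 then 1 else 0) + -(-α) ^ (n + 1) := by
  rw [PowerSeries.coeff_derivative, Lam, coeff_mk, if_neg (by omega)]
  have hn1 : ((n : ℝ) + 1) ≠ 0 := by positivity
  rcases Nat.eq_zero_or_pos n with rfl | hn
  · norm_num
  · rw [if_neg (by omega), if_neg (by omega)]
    push_cast
    field_simp

    ring
lemma dLam_mul (α : ℝ) :
    d⁄dX ℝ (Lam α) * (1 + C α * X) = 1 + C α + C α * X := by
  have expand : d⁄dX ℝ (Lam α) * (1 + C α * X) =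
      d⁄dX ℝ (Lam α) + C α * (X * d⁄dX ℝ (Lam α)) := by ring
  rw [expand]
  ext n
  rw [map_add, map_add, map_add, PowerSeries.coeff_C_mul]
  match n with
  | 0 =>
      rw [coeff_zero_eq_constantCoeff_apply, coeff_zero_eq_constantCoeff_apply,
        coeff_zero_eq_constantCoeff_apply, coeff_zero_eq_constantCoeff_apply]
      rw [show constantCoeff (X * d⁄dX ℝ (Lam α)) = 0 from by simp]
      rw [show constantCoeff (d⁄dX ℝ (Lam α)) =
        coeff 0 (d⁄dX ℝ (Lam α)) from (coeff_zero_eq_constantCoeff_apply _).symm]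
      rw [coeff_deriv_Lam, if_pos rfl]
      simp [PowerSeries.constantCoeff_C]
  | (m + 1) =>
      rw [PowerSeries.coeff_succ_X_mul, coeff_deriv_Lam, coeff_deriv_Lam,
        if_neg (by omega)]
      have hC : coeff (m+1) (C α * X) = if m + 1 = 1 then α else 0 := by
        rw [show (C α * X : ℝ⟦X⟧) = C α * X ^ 1 from by ring,
          PowerSeries.coeff_C_mul, PowerSeries.coeff_X_pow]
        rw [mul_ite, mul_one, mul_zero]
      have h1 : coeff (m+1) (1 : ℝ⟦X⟧) = 0 := by
        rw [PowerSeries.coeff_one, if_neg (by omega)]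
      have h2 : coeff (m+1) (C α : ℝ⟦X⟧) = 0 := by
        rw [PowerSeries.coeff_C, if_neg (by omega)]
      rw [hC, h1, h2]
      match m with
      | 0 => norm_num; ring
      | (p + 1) =>
          rw [if_neg (by omega), if_neg (by omega), pow_succ (-α) (p + 1 + 1)]
          ring

lemma dLam_F (α : ℝ) : d⁄dX ℝ (Fser α) = d⁄dX ℝ (Lam α) * Fser α := by
  have h1 : d⁄dX ℝ (1 + C α * X) = C α := by
    rw [map_add, deriv_mul (C α) X, PowerSeries.derivative_X, PowerSeries.derivative_C]
    simp
  rw [Fser, deriv_mul, deriv_Eexp, h1]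
  calc (1 + C α * X) * Eexp + Eexp * C α = (1 + C α + C α * X) * Eexp := by ring
    _ = (d⁄dX ℝ (Lam α) * (1 + C α * X)) * Eexp := by rw [dLam_mul α]
    _ = _ := by ring

lemma constantCoeff_Phi (α : ℝ) (r : ℕ) : constantCoeff (Fser α ^ r) = 1 := by
  rw [map_pow, constantCoeff_Fser, one_pow]

/-- coefficient of a product `dF * F^e` -/
lemma coeff_dF_Fpow (α : ℝ) (e m : ℕ) :
    coeff m (d⁄dX ℝ (Fser α) * Fser α ^ e) * ((e : ℝ) + 1) =
      coeff (m + 1) (Fser α ^ (e + 1)) * ((m : ℝ) + 1) := by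
  have h1 : coeff m (d⁄dX ℝ (Fser α ^ (e + 1))) =
      coeff (m + 1) (Fser α ^ (e + 1)) * ((m : ℝ) + 1) := by
    rw [PowerSeries.coeff_derivative]
  rw [← h1, deriv_pow_succ, PowerSeries.coeff_C_mul,
    show Fser α ^ e * d⁄dX ℝ (Fser α) = d⁄dX ℝ (Fser α) * Fser α ^ e from mul_comm _ _]
  ring

lemma coeff_Lc (α : ℝ) (r : ℕ) (hr : 1 ≤ r) (m : ℕ) :
    coeff (m + 1) (comp (Lam α) (wser (Fser α ^ r))) =
      coeff (m + 1) (Fser α ^ ((m + 1) * r)) / (((m + 1) * r : ℕ) : ℝ) := by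
  obtain ⟨e, he⟩ : ∃ e, (m + 1) * r = e + 1 :=
    ⟨(m + 1) * r - 1, (Nat.succ_pred_eq_of_pos (Nat.mul_pos (by omega) hr)).symm⟩
  have hK := K3 (constantCoeff_Phi α r) (Lam α) m
  have hpow : (Fser α ^ r) ^ (m + 1) = Fser α ^ ((m + 1) * r) := by
    rw [← pow_mul, Nat.mul_comm]
  rw [hpow, he] at hK
  have hsplit : d⁄dX ℝ (Lam α) * Fser α ^ (e + 1) = d⁄dX ℝ (Fser α) * Fser α ^ e := by
    rw [pow_succ, dLam_F α]; ring
  rw [hsplit] at hK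
  have hcoef := coeff_dF_Fpow α e m
  have hm1 : ((m : ℝ) + 1) ≠ 0 := by positivity
  have he1 : ((e : ℝ) + 1) ≠ 0 := by positivity
  rw [he]
  push_cast
  field_simp
  -- hK : (m+1) * coeff (m+1) (comp ..) = coeff m (dF * F^e)
  -- hcoef : coeff m (dF*F^e) * (e+1) = coeff (m+1) (F^(e+1)) * (m+1)
  nlinarith [hK, hcoef]

lemma coeff_Bc (α : ℝ) (r s : ℕ) (hr : 1 ≤ r) (hs : 1 ≤ s) (n : ℕ) :
    coeff (n + 1) (comp (Fser α ^ s) (wser (Fser α ^ r))) =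
      (s : ℝ) * coeff (n + 1) (Fser α ^ ((n + 1) * r + s)) / (((n + 1) * r + s : ℕ) : ℝ) := by
  obtain ⟨s', rfl⟩ : ∃ s', s = s' + 1 := ⟨s - 1, by omega⟩
  set e : ℕ := (n + 1) * r + s' with hedef
  have hK := K3 (constantCoeff_Phi α r) (Fser α ^ (s' + 1)) n
  have hpow : (Fser α ^ r) ^ (n + 1) = Fser α ^ ((n + 1) * r) := by
    rw [← pow_mul, Nat.mul_comm]
  rw [hpow] at hK
  have hsplit : d⁄dX ℝ (Fser α ^ (s' + 1)) * Fser α ^ ((n + 1) * r) =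
      C ((s' : ℝ) + 1) * (d⁄dX ℝ (Fser α) * Fser α ^ e) := by
    rw [deriv_pow_succ, hedef, pow_add]
    ring
  rw [hsplit, PowerSeries.coeff_C_mul] at hK
  have hcoef := coeff_dF_Fpow α e n
  have hn1 : ((n : ℝ) + 1) ≠ 0 := by positivity
  have he1 : ((e : ℝ) + 1) ≠ 0 := by positivity
  have heq : (n + 1) * r + (s' + 1) = e + 1 := by omega
  rw [heq]
  push_cast
  field_simp
  nlinarith [hK, hcoef]

/-- the heart: exp(s·L) = F^s ∘ w -/
lemma comp_Eexp_eq (α : ℝ) (r s : ℕ) (hs : 1 ≤ s) :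
    comp Eexp (C (s : ℝ) * comp (Lam α) (wser (Fser α ^ r))) =
      comp (Fser α ^ s) (wser (Fser α ^ r)) := by
  set W := wser (Fser α ^ r) with hWdef
  have hW0 : constantCoeff W = 0 := constantCoeff_wser _
  set Lc := comp (Lam α) W with hLcdef
  have hLc0 : constantCoeff Lc = 0 := by
    rw [hLcdef, constantCoeff_comp, constantCoeff_Lam]
  have hfS0 : constantCoeff (C (s : ℝ) * Lc) = 0 := by
    rw [map_mul, hLc0, mul_zero]
  have hdfS : d⁄dX ℝ (C (s : ℝ) * Lc) = C (s : ℝ) * d⁄dX ℝ Lc := by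
    rw [deriv_mul, PowerSeries.derivative_C]
    simp
  have hdLc : d⁄dX ℝ Lc = comp (d⁄dX ℝ (Lam α)) W * d⁄dX ℝ W := deriv_comp hW0 _
  have hdBv : d⁄dX ℝ (comp (Fser α) W) = d⁄dX ℝ Lc * comp (Fser α) W := by
    rw [deriv_comp hW0, dLam_F α, comp_mul hW0, hdLc]
    ring
  have hY1 : d⁄dX ℝ (comp Eexp (C (s : ℝ) * Lc)) =
      (C (s : ℝ) * d⁄dX ℝ Lc) * comp Eexp (C (s : ℝ) * Lc) := by
    rw [deriv_comp hfS0, deriv_Eexp, hdfS]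
    ring
  obtain ⟨s', rfl⟩ : ∃ s', s = s' + 1 := ⟨s - 1, by omega⟩
  have hY2 : d⁄dX ℝ (comp (Fser α ^ (s' + 1)) W) =
      (C ((s' + 1 : ℕ) : ℝ) * d⁄dX ℝ Lc) * comp (Fser α ^ (s' + 1)) W := by
    rw [comp_pow hW0, deriv_pow_succ, hdBv]
    rw [show comp (Fser α) W ^ (s' + 1) = comp (Fser α) W ^ s' * comp (Fser α) W from pow_succ _ _]
    push_cast
    ring
  refine ode_unique hY1 ?_ ?_
  · exact hY2
  · rw [constantCoeff_comp, constantCoeff_Eexp, constantCoeff_comp, map_pow,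
      constantCoeff_Fser, one_pow]

lemma Z17_eq (α : ℝ) (r n t : ℕ) :
    Z17 r α n t = (n.factorial : ℝ) * coeff n (Fser α ^ (n * r + t)) / ((n * r + t : ℕ) : ℝ) := by
  rw [Z17, coeff_F_pow, Finset.mul_sum, Finset.mul_sum, Finset.sum_div]
  refine Finset.sum_congr rfl fun j _ => ?_
  ring

theorem stmt_17_aux (r : ℕ) (hr : 1 ≤ r) (α : ℝ) (n s : ℕ) (hn : 1 ≤ n) (hs : 1 ≤ s) :
    bellA n (fun m => (s : ℝ) * Z17 r α m 0) = (s : ℝ) * Z17 r α n s := by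
  have hfb : (PowerSeries.mk fun m =>
      if m = 0 then 0 else ((s : ℝ) * Z17 r α m 0) / (m.factorial : ℝ)) =
      C (s : ℝ) * comp (Lam α) (wser (Fser α ^ r)) := by
    ext m
    rw [coeff_mk, PowerSeries.coeff_C_mul]
    match m with
    | 0 =>
        rw [if_pos rfl, coeff_zero_eq_constantCoeff_apply, constantCoeff_comp,
          constantCoeff_Lam, mul_zero]
    | (m' + 1) =>
        rw [if_neg (by omega), coeff_Lc α r hr m', Z17_eq α r (m' + 1) 0]
        have hfac : ((m' + 1).factorial : ℝ) ≠ 0 := by positivity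
        rw [show (m' + 1) * r + 0 = (m' + 1) * r from by omega]
        field_simp
  -- unfold bellA / bellB
  rw [bellA, if_neg (by omega)]
  have hbell : ∀ k, bellB n k (fun m => (s : ℝ) * Z17 r α m 0) =
      ((n.factorial : ℝ) / (k.factorial : ℝ)) *
        coeff n ((C (s : ℝ) * comp (Lam α) (wser (Fser α ^ r))) ^ k) := by
    intro k
    rw [bellB]
    congr 2
    rw [← hfb]
  rw [Finset.sum_congr rfl fun k _ => hbell k]
  -- relate the Icc-sum to the coefficient of the composed exponential
  have hrange : range (n + 1) = insert 0 (Finset.Icc 1 n) := by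
    ext k; simp only [mem_range, Finset.mem_insert, Finset.mem_Icc]; omega
  have hE : coeff n (comp Eexp (C (s : ℝ) * comp (Lam α) (wser (Fser α ^ r)))) =
      ∑ k ∈ range (n + 1),
        ((k.factorial : ℝ))⁻¹ *
          coeff n ((C (s : ℝ) * comp (Lam α) (wser (Fser α ^ r))) ^ k) := by
    rw [coeff_comp]
    exact Finset.sum_congr rfl fun k _ => by rw [coeff_Eexp]
  have hzero : ((Nat.factorial 0 : ℝ))⁻¹ *
      coeff n ((C (s : ℝ) * comp (Lam α) (wser (Fser α ^ r))) ^ 0) = 0 := by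
    rw [pow_zero, PowerSeries.coeff_one, if_neg (by omega), mul_zero]
  have hsum : ∑ k ∈ Finset.Icc 1 n,
      ((n.factorial : ℝ) / (k.factorial : ℝ)) *
        coeff n ((C (s : ℝ) * comp (Lam α) (wser (Fser α ^ r))) ^ k) =
      (n.factorial : ℝ) *
        coeff n (comp Eexp (C (s : ℝ) * comp (Lam α) (wser (Fser α ^ r)))) := by
    rw [hE, hrange, Finset.sum_insert (by simp), hzero, zero_add, Finset.mul_sum]
    refine Finset.sum_congr rfl fun k _ => ?_
    rw [div_eq_mul_inv]
    ring
  rw [hsum, comp_Eexp_eq α r s hs]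
  obtain ⟨n', rfl⟩ : ∃ n', n = n' + 1 := ⟨n - 1, by omega⟩
  rw [coeff_Bc α r s hr hs n', Z17_eq α r (n' + 1) s]
  have hfac : (((n' + 1).factorial : ℝ)) ≠ 0 := by positivity
  field_simp

end Stmt17Aux

theorem stmt_17 (r : ℕ) (hr : 1 ≤ r) (α : ℝ) (n s : ℕ) (hn : 1 ≤ n) (hs : 1 ≤ s) :
    bellA n (fun m => (s : ℝ) * Z17 r α m 0) = (s : ℝ) * Z17 r α n s :=
  Stmt17Aux.stmt_17_aux r hr α n s hn hs
end

section
/- For natural numbers n ≥ 1, r ≥ 1, s ≥ 0 with R := nr + s, and real numbers x, β, α, the sequence Z₃(n,s) := (1/R) ∑_{j=0}^n C(n,j) (βj + αR)^{n-j} R^j t^j satisfies A_n(s·Z₃(1,0), ..., s·Z₃(n,0)) = s·Z₃(n,s) for all s ≥ 1, where Z₃(m,0) is computed with R = mr (convention 0^0 = 1). -/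
open Finset

/-- `Z₃(n,s) = (1/R) ∑_{j=0}^n C(n,j)(βj+αR)^{n-j} R^j t^j`, `R = nr+s`. -/
noncomputable def Z18 (r : ℕ) (α β t : ℝ) (n s : ℕ) : ℝ :=
  (1 / ((n * r + s : ℕ) : ℝ)) *
    ∑ j ∈ Finset.range (n + 1),
      (n.choose j : ℝ) * (β * j + α * ((n * r + s : ℕ) : ℝ)) ^ (n - j) *
        ((n * r + s : ℕ) : ℝ) ^ j * t ^ j


namespace LIF
open PowerSeries

noncomputable def D (f : ℝ⟦X⟧) : ℝ⟦X⟧ := PowerSeries.derivativeFun f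

lemma coeff_D (f : ℝ⟦X⟧) (n : ℕ) : coeff n (D f) = coeff (n+1) f * (n+1) :=
  PowerSeries.coeff_derivativeFun f n

lemma D_mul (f g : ℝ⟦X⟧) : D (f * g) = f * D g + g * D f := by
  rw [D, PowerSeries.derivativeFun_mul]; simp [D, smul_eq_mul]

lemma D_add (f g : ℝ⟦X⟧) : D (f + g) = D f + D g := PowerSeries.derivativeFun_add f g

lemma D_smul (a : ℝ) (f : ℝ⟦X⟧) : D (a • f) = a • D f := PowerSeries.derivativeFun_smul a f

lemma D_pow (f : ℝ⟦X⟧) (k : ℕ) : D (f ^ (k+1)) = ((k:ℝ)+1) • (f ^ k * D f) := by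
  induction k with
  | zero => simp
  | succ k ih =>
    rw [pow_succ, D_mul, ih]
    simp only [PowerSeries.smul_eq_C_mul, map_add, map_one, Nat.cast_add, Nat.cast_one]
    ring

/-- coefficient vanishing for powers of a series with zero constant term -/
lemma coeff_pow_eq_zero {f : ℝ⟦X⟧} (hf : constantCoeff f = 0) {n k : ℕ} (h : n < k) :
    coeff n (f ^ k) = 0 := by
  have hdvd : (X : ℝ⟦X⟧) ^ k ∣ f ^ k := pow_dvd_pow_of_dvd (PowerSeries.X_dvd_iff.mpr hf) k
  exact (PowerSeries.X_pow_dvd_iff.mp hdvd) n h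

/-- `E f` is `exp ∘ f` for `f` with zero constant term. -/
noncomputable def E (f : ℝ⟦X⟧) : ℝ⟦X⟧ :=
  PowerSeries.mk fun n => ∑ k ∈ range (n+1), coeff n (f ^ k) / (Nat.factorial k : ℝ)

lemma coeff_E (f : ℝ⟦X⟧) (n : ℕ) :
    coeff n (E f) = ∑ k ∈ range (n+1), coeff n (f ^ k) / (Nat.factorial k : ℝ) :=
  PowerSeries.coeff_mk n _

lemma coeff_E_ext {f : ℝ⟦X⟧} (hf : constantCoeff f = 0) {n N : ℕ} (h : n < N) :
    coeff n (E f) = ∑ k ∈ range N, coeff n (f ^ k) / (Nat.factorial k : ℝ) := by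
  rw [coeff_E]
  apply Finset.sum_subset
  · exact Finset.range_subset_range.mpr h
  · intro k _ hk
    rw [Finset.mem_range, not_lt] at hk
    rw [coeff_pow_eq_zero hf (by omega)]
    simp

lemma constantCoeff_E (f : ℝ⟦X⟧) : constantCoeff (E f) = 1 := by
  rw [← PowerSeries.coeff_zero_eq_constantCoeff_apply, coeff_E]
  simp

lemma E_zero : E (0 : ℝ⟦X⟧) = 1 := by
  ext n
  rw [coeff_E]
  rcases Nat.eq_zero_or_pos n with h | h
  · subst h; simp
  · rw [PowerSeries.coeff_one, if_neg (by omega)]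
    apply Finset.sum_eq_zero
    intro k hk
    rcases Nat.eq_zero_or_pos k with h2 | h2
    · subst h2; simp [PowerSeries.coeff_one]; omega
    · rw [zero_pow (by omega)]; simp

lemma D_E {f : ℝ⟦X⟧} (hf : constantCoeff f = 0) : D (E f) = D f * E f := by
  ext n
  rw [coeff_D, coeff_E_ext hf (show n+1 < n+2 by omega), Finset.sum_mul]
  have LHS : ∑ k ∈ range (n+2), coeff (n+1) (f^k) / (Nat.factorial k : ℝ) * ((n:ℝ)+1)
      = ∑ k ∈ range (n+1), coeff n (f^k * D f) / (Nat.factorial k : ℝ) := by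
    have h1 : ∀ k ∈ range (n+2), coeff (n+1) (f^k) / (Nat.factorial k : ℝ) * ((n:ℝ)+1)
        = coeff n (D (f^k)) / (Nat.factorial k : ℝ) := by
      intro k _
      rw [coeff_D]
      push_cast
      ring
    rw [Finset.sum_congr rfl h1, Finset.sum_range_succ']
    have h0 : coeff n (D (f^0)) / (Nat.factorial 0 : ℝ) = 0 := by
      simp [D, PowerSeries.derivativeFun_one]
    rw [h0, add_zero]
    apply Finset.sum_congr rfl
    intro k _
    rw [D_pow]
    rw [map_smul]
    rw [Nat.factorial_succ]
    push_cast
    rw [smul_eq_mul]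
    have hk : (Nat.factorial k : ℝ) ≠ 0 := by positivity
    field_simp
  rw [LHS, PowerSeries.coeff_mul]
  have h2 : ∀ p ∈ Finset.HasAntidiagonal.antidiagonal n, coeff p.1 (D f) * coeff p.2 (E f)
      = ∑ k ∈ range (n+1), coeff p.1 (D f) * coeff p.2 (f^k) / (Nat.factorial k : ℝ) := by
    intro p hp
    rw [Finset.HasAntidiagonal.mem_antidiagonal] at hp
    rw [coeff_E_ext hf (show p.2 < n+1 by omega), Finset.mul_sum]
    apply Finset.sum_congr rfl
    intro k _
    ring
  rw [Finset.sum_congr rfl h2, Finset.sum_comm]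
  apply Finset.sum_congr rfl
  intro k _
  rw [mul_comm (f^k) (D f), PowerSeries.coeff_mul, Finset.sum_div]

lemma ODE_unique {a F G : ℝ⟦X⟧} (hF : D F = a * F) (hG : D G = a * G)
    (h0 : constantCoeff F = constantCoeff G) : F = G := by
  ext n
  induction n using Nat.strong_induction_on with
  | _ n ih =>
    match n with
    | 0 => simpa using h0
    | (n+1) =>
      have hc : coeff n (a * F) = coeff n (a * G) := by
        rw [PowerSeries.coeff_mul, PowerSeries.coeff_mul]
        apply Finset.sum_congr rfl
        intro p hp
        rw [Finset.HasAntidiagonal.mem_antidiagonal] at hp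
        rw [ih p.2 (by omega)]
      have h1 := coeff_D F n
      have h2 := coeff_D G n
      rw [hF] at h1
      rw [hG] at h2
      have h3 : coeff (n+1) F * ((n:ℝ)+1) = coeff (n+1) G * ((n:ℝ)+1) := by
        rw [← h1, ← h2, hc]
      exact mul_right_cancel₀ (by positivity) h3

lemma E_add {f g : ℝ⟦X⟧} (hf : constantCoeff f = 0) (hg : constantCoeff g = 0) :
    E (f + g) = E f * E g := by
  have hfg : constantCoeff (f + g) = 0 := by simp [hf, hg]
  apply ODE_unique (a := D f + D g)
  · rw [D_E hfg, D_add]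
  · rw [D_mul, D_E hf, D_E hg]
    ring
  · simp [constantCoeff_E]

lemma constantCoeff_smul (a : ℝ) {f : ℝ⟦X⟧} (hf : constantCoeff f = 0) :
    constantCoeff (a • f) = 0 := by
  rw [PowerSeries.smul_eq_C_mul, map_mul, hf, mul_zero]

lemma E_smul_add (a b : ℝ) {f : ℝ⟦X⟧} (hf : constantCoeff f = 0) :
    E ((a+b) • f) = E (a • f) * E (b • f) := by
  rw [add_smul]
  exact E_add (constantCoeff_smul a hf) (constantCoeff_smul b hf)

lemma E_smul_zero (f : ℝ⟦X⟧) : E ((0:ℝ) • f) = 1 := by rw [zero_smul, E_zero]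

lemma E_pow (a : ℝ) {f : ℝ⟦X⟧} (hf : constantCoeff f = 0) (k : ℕ) :
    (E (a • f)) ^ k = E (((k:ℝ) * a) • f) := by
  induction k with
  | zero => simp [zero_smul, E_zero]
  | succ k ih =>
    rw [pow_succ, ih]
    rw [← E_smul_add _ _ hf]
    push_cast
    ring_nf
noncomputable def comp (P f : ℝ⟦X⟧) : ℝ⟦X⟧ :=
  PowerSeries.mk fun n => ∑ k ∈ range (n+1), coeff k P * coeff n (f ^ k)

lemma coeff_comp (P f : ℝ⟦X⟧) (n : ℕ) :
    coeff n (comp P f) = ∑ k ∈ range (n+1), coeff k P * coeff n (f ^ k) :=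
  PowerSeries.coeff_mk n _

lemma coeff_comp_ext {f : ℝ⟦X⟧} (hf : constantCoeff f = 0) (P : ℝ⟦X⟧) {n N : ℕ} (h : n < N) :
    coeff n (comp P f) = ∑ k ∈ range N, coeff k P * coeff n (f ^ k) := by
  rw [coeff_comp]
  apply Finset.sum_subset (Finset.range_subset_range.mpr h)
  intro k _ hk
  rw [Finset.mem_range, not_lt] at hk
  rw [coeff_pow_eq_zero hf (by omega), mul_zero]

lemma constantCoeff_comp {f : ℝ⟦X⟧} (P : ℝ⟦X⟧) :
    constantCoeff (comp P f) = coeff 0 P * constantCoeff (f ^ 0) := by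
  rw [← PowerSeries.coeff_zero_eq_constantCoeff_apply, coeff_comp]
  simp

lemma constantCoeff_comp' {f : ℝ⟦X⟧} (P : ℝ⟦X⟧) :
    constantCoeff (comp P f) = constantCoeff P := by
  rw [constantCoeff_comp, pow_zero, map_one, mul_one,
    PowerSeries.coeff_zero_eq_constantCoeff_apply]

lemma coeff_comp_mul {f : ℝ⟦X⟧} (hf : constantCoeff f = 0) (P h : ℝ⟦X⟧) (n : ℕ) :
    coeff n (comp P f * h) = ∑ k ∈ range (n+1), coeff k P * coeff n (f ^ k * h) := by
  rw [PowerSeries.coeff_mul]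
  have h1 : ∀ p ∈ Finset.HasAntidiagonal.antidiagonal n, coeff p.1 (comp P f) * coeff p.2 h
      = ∑ k ∈ range (n+1), coeff k P * (coeff p.1 (f ^ k) * coeff p.2 h) := by
    intro p hp
    rw [Finset.HasAntidiagonal.mem_antidiagonal] at hp
    rw [coeff_comp_ext hf P (show p.1 < n+1 by omega), Finset.sum_mul]
    apply Finset.sum_congr rfl
    intro k _
    ring
  rw [Finset.sum_congr rfl h1, Finset.sum_comm]
  apply Finset.sum_congr rfl
  intro k _
  rw [PowerSeries.coeff_mul, Finset.mul_sum]

lemma comp_mul {f : ℝ⟦X⟧} (hf : constantCoeff f = 0) (P Q : ℝ⟦X⟧) :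
    comp (P * Q) f = comp P f * comp Q f := by
  ext n
  have key : ∀ h : ℝ⟦X⟧, True := fun _ => trivial
  -- RHS
  have hR : coeff n (comp P f * comp Q f)
      = ∑ p ∈ Finset.range (n+1) ×ˢ Finset.range (n+1),
          coeff p.1 P * coeff p.2 Q * coeff n (f ^ (p.1 + p.2)) := by
    rw [coeff_comp_mul hf, Finset.sum_product]
    apply Finset.sum_congr rfl
    intro k _
    rw [mul_comm (f ^ k) (comp Q f), coeff_comp_mul hf, Finset.mul_sum]
    apply Finset.sum_congr rfl
    intro l _
    rw [← pow_add]
    ring_nf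
  -- LHS
  have hL : coeff n (comp (P * Q) f)
      = ∑ p ∈ (Finset.range (n+1)).biUnion (fun k => Finset.HasAntidiagonal.antidiagonal k),
          coeff p.1 P * coeff p.2 Q * coeff n (f ^ (p.1 + p.2)) := by
    rw [coeff_comp]
    rw [Finset.sum_biUnion]
    · apply Finset.sum_congr rfl
      intro k _
      rw [PowerSeries.coeff_mul, Finset.sum_mul]
      apply Finset.sum_congr rfl
      intro p hp
      rw [Finset.HasAntidiagonal.mem_antidiagonal] at hp
      rw [hp]
    · intro a _ b _ hab
      simp only [Finset.disjoint_left]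
      intro p hpa hpb
      rw [Finset.HasAntidiagonal.mem_antidiagonal] at hpa hpb
      exact hab (by omega)
  rw [hL, hR]
  apply Finset.sum_subset
  · intro p hp
    rw [Finset.mem_biUnion] at hp
    obtain ⟨k, hk, hpk⟩ := hp
    rw [Finset.mem_range] at hk
    rw [Finset.HasAntidiagonal.mem_antidiagonal] at hpk
    rw [Finset.mem_product, Finset.mem_range, Finset.mem_range]
    omega
  · intro p hp hnp
    have hgt : n < p.1 + p.2 := by
      by_contra hle
      push_neg at hle
      apply hnp
      rw [Finset.mem_biUnion]
      exact ⟨p.1 + p.2, Finset.mem_range.mpr (by omega), Finset.HasAntidiagonal.mem_antidiagonal.mpr rfl⟩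
    rw [coeff_pow_eq_zero hf hgt, mul_zero]

lemma comp_smul (a : ℝ) (P f : ℝ⟦X⟧) : comp (a • P) f = a • comp P f := by
  ext n
  rw [PowerSeries.coeff_smul, coeff_comp, coeff_comp, Finset.smul_sum]
  apply Finset.sum_congr rfl
  intro k _
  rw [PowerSeries.coeff_smul, smul_eq_mul, smul_eq_mul, mul_assoc]

lemma D_comp {f : ℝ⟦X⟧} (hf : constantCoeff f = 0) (P : ℝ⟦X⟧) :
    D (comp P f) = comp (D P) f * D f := by
  ext n
  rw [coeff_D, coeff_comp_ext hf P (show n+1 < n+2 by omega), Finset.sum_mul]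
  have h1 : ∀ k ∈ range (n+2), coeff k P * coeff (n+1) (f^k) * ((n:ℝ)+1)
      = coeff k P * coeff n (D (f^k)) := by
    intro k _
    rw [coeff_D]
    ring
  rw [Finset.sum_congr rfl h1, Finset.sum_range_succ']
  have h0 : coeff 0 P * coeff n (D (f^0)) = 0 := by
    simp [D, PowerSeries.derivativeFun_one]
  rw [h0, add_zero, coeff_comp_mul hf]
  apply Finset.sum_congr rfl
  intro k _
  rw [D_pow, map_smul, coeff_D, smul_eq_mul]
  push_cast
  ring

lemma E_comp {f g : ℝ⟦X⟧} (hf : constantCoeff f = 0) (hg : constantCoeff g = 0) :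
    comp (E f) g = E (comp f g) := by
  have hfg : constantCoeff (comp f g) = 0 := by rw [constantCoeff_comp', hf]
  apply ODE_unique (a := comp (D f) g * D g)
  · rw [D_comp hg, D_E hf, comp_mul hg]
    ring
  · rw [D_E hfg, D_comp hg]
  · rw [constantCoeff_comp', constantCoeff_E, constantCoeff_E]
lemma D_X : D (X : ℝ⟦X⟧) = 1 := by
  ext n
  rw [coeff_D, PowerSeries.coeff_X, PowerSeries.coeff_one]
  rcases Nat.eq_zero_or_pos n with h | h
  · subst h; simp
  · rw [if_neg (by omega), if_neg (by omega), zero_mul]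

lemma D_E_smul (a : ℝ) {A : ℝ⟦X⟧} (hA : constantCoeff A = 0) :
    D (E (a • A)) = a • (D A * E (a • A)) := by
  rw [D_E (constantCoeff_smul a hA), D_smul, smul_mul_assoc]

lemma constantCoeff_w (r : ℝ) (A : ℝ⟦X⟧) : constantCoeff (X * E (r • A)) = 0 := by
  rw [map_mul, PowerSeries.constantCoeff_X, zero_mul]

lemma w_pow {A : ℝ⟦X⟧} (hA : constantCoeff A = 0) (r : ℝ) (j : ℕ) :
    (X * E (r • A)) ^ j = X ^ j * E ((((j:ℕ):ℝ) * r) • A) := by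
  rw [mul_pow, E_pow r hA j]

lemma coeff_X_pow_mul_lt (v : ℝ⟦X⟧) {i j : ℕ} (h : i < j) :
    coeff i ((X:ℝ⟦X⟧) ^ j * v) = 0 :=
  (PowerSeries.X_pow_dvd_iff.mp ⟨v, rfl⟩) i h

lemma coeff_X_pow_mul_le (v : ℝ⟦X⟧) {d n : ℕ} (h : n ≤ d) :
    coeff d ((X:ℝ⟦X⟧) ^ n * v) = coeff (d - n) v := by
  obtain ⟨j, rfl⟩ : ∃ j, d = j + n := ⟨d - n, by omega⟩
  have h2 : j + n - n = j := by omega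
  rw [h2, PowerSeries.coeff_X_pow_mul]

lemma CV {A : ℝ⟦X⟧} (hA : constantCoeff A = 0) {r : ℝ} (hr : r ≠ 0) (m : ℕ) (P : ℝ⟦X⟧) :
    coeff m (comp P (X * E (r • A)) * (D (X * E (r • A)) * E ((-(((m:ℝ)+1) * r)) • A)))
      = coeff m P := by
  set w := X * E (r • A) with hw_def
  have hw : constantCoeff w = 0 := constantCoeff_w r A
  set c : ℝ := -(((m:ℝ)+1) * r) with hc_def
  rw [coeff_comp_mul hw]
  have key : ∀ k ∈ range (m+1),
      coeff k P * coeff m (w ^ k * (D w * E (c • A)))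
        = coeff k P * (if k = m then 1 else 0) := by
    intro k hk
    rw [Finset.mem_range] at hk
    congr 1
    -- rewrite w^k * D w via derivative of w^(k+1)
    have hpow : w ^ k * (D w * E (c • A)) = (((k:ℝ)+1))⁻¹ • (D (w ^ (k+1)) * E (c • A)) := by
      rw [D_pow, smul_mul_assoc, smul_smul, inv_mul_cancel₀ (by positivity), one_smul,
        mul_assoc]
    rw [hpow, PowerSeries.coeff_smul, smul_eq_mul]
    set b : ℝ := ((k:ℝ)+1) * r with hb_def
    set cc : ℝ := b + c with hcc_def
    have hwp : w ^ (k+1) = X ^ (k+1) * E (b • A) := by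
      rw [w_pow hA r (k+1)]
      congr 2
      push_cast
      ring
    have hDw1 : D (w ^ (k+1)) = X^(k+1) * (b • (D A * E (b • A)))
        + E (b • A) * (((k:ℝ)+1) • (X^k * 1)) := by
      rw [hwp, D_mul, D_E_smul b hA, D_pow X k, D_X]
    have hbc : E (cc • A) = E (b • A) * E (c • A) := E_smul_add b c hA
    have hterm : D (w ^ (k+1)) * E (c • A)
        = b • (X^(k+1) * (D A * E (cc • A))) + ((k:ℝ)+1) • (X^k * E (cc • A)) := by
      rw [hDw1, hbc]
      simp only [PowerSeries.smul_eq_C_mul, mul_one]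
      ring
    rw [hterm, map_add, PowerSeries.coeff_smul, PowerSeries.coeff_smul, smul_eq_mul, smul_eq_mul]
    rcases Nat.lt_or_ge k m with hkm | hkm
    · -- k < m : the two terms cancel
      rw [if_neg (by omega)]
      have hcc : cc ≠ 0 := by
        rw [hcc_def, hb_def, hc_def]
        intro h
        have : ((k:ℝ) - (m:ℝ)) * r = 0 := by linarith [h]
        rcases mul_eq_zero.mp this with h' | h'
        · have : (k:ℝ) = (m:ℝ) := by linarith
          exact (by omega : k ≠ m) (by exact_mod_cast this)
        · exact hr h'
      have hADE : D A * E (cc • A) = cc⁻¹ • D (E (cc • A)) := by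
        rw [D_E_smul cc hA, smul_smul, inv_mul_cancel₀ hcc, one_smul]
      -- coeff of first term
      have h1 : coeff m (X^(k+1) * (D A * E (cc • A)))
          = cc⁻¹ * (coeff (m-k) (E (cc • A)) * ((m:ℝ) - (k:ℝ))) := by
        rw [coeff_X_pow_mul_le _ (by omega : k+1 ≤ m), hADE, PowerSeries.coeff_smul, smul_eq_mul,
          coeff_D]
        have : m - (k+1) + 1 = m - k := by omega
        rw [this]
        have hcast : ((m - (k+1) : ℕ):ℝ) + 1 = (m:ℝ) - (k:ℝ) := by
          rw [Nat.cast_sub (by omega)]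
          push_cast
          ring
        rw [hcast]
      -- coeff of second term
      have h2 : coeff m ((X:ℝ⟦X⟧)^k * E (cc • A)) = coeff (m-k) (E (cc • A)) :=
        coeff_X_pow_mul_le _ (by omega)
      rw [h1, h2]
      generalize coeff (m - k) (E (cc • A)) = Y
      rw [hb_def, hcc_def, hc_def]
      have hkm' : (k:ℝ) - (m:ℝ) ≠ 0 := by
        intro h
        have : (k:ℝ) = (m:ℝ) := by linarith
        exact (by omega : k ≠ m) (by exact_mod_cast this)
      have hcc2 : ((k:ℝ)+1)*r + -(((m:ℝ)+1)*r) ≠ 0 := by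
        rwa [hcc_def, hb_def, hc_def] at hcc
      rw [hb_def]
      field_simp
      have hinv : ((k:ℝ) - m) * ((k:ℝ) - m)⁻¹ = 1 := mul_inv_cancel₀ hkm'
      linear_combination (-Y) * hinv
    · -- k = m
      have hkeq : k = m := by omega
      subst hkeq
      rw [if_pos rfl]
      have hcc0 : cc = 0 := by rw [hcc_def, hb_def, hc_def]; ring
      rw [hcc0, zero_smul, E_zero]
      have h1 : coeff k ((X:ℝ⟦X⟧)^(k+1) * (D A * 1)) = 0 := coeff_X_pow_mul_lt _ (by omega)
      have h2 : coeff k ((X:ℝ⟦X⟧)^k * 1) = 1 := by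
        have := PowerSeries.coeff_X_pow_mul (1 : ℝ⟦X⟧) k 0
        rw [zero_add] at this
        rw [this, PowerSeries.coeff_zero_eq_constantCoeff_apply, map_one]
      rw [h1, h2]
      field_simp
      ring
  rw [Finset.sum_congr rfl key]
  have : ∀ k ∈ range (m+1), coeff k P * (if k = m then 1 else 0)
      = if k = m then coeff k P else 0 := by
    intro k _
    split <;> simp
  rw [Finset.sum_congr rfl this, Finset.sum_ite_eq' (range (m+1)) m (fun k => coeff k P),
    if_pos (Finset.mem_range.mpr (by omega))]
lemma coeff_D_pred {f : ℝ⟦X⟧} {m : ℕ} (hm : 0 < m) :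
    coeff (m-1) (D f) = (m:ℝ) * coeff m f := by
  rw [coeff_D, show m-1+1 = m by omega]
  have : ((m-1:ℕ):ℝ) + 1 = (m:ℝ) := by
    rw [Nat.cast_sub (by omega)]
    push_cast
    ring
  rw [this, mul_comm]

lemma coeff_E_order {g : ℝ⟦X⟧} {M : ℕ} (hM : ∀ i < M, coeff i g = 0) {j : ℕ}
    (hj : 0 < j) (hjM : j < M) : coeff j (E g) = 0 := by
  have hdvd : (X:ℝ⟦X⟧)^M ∣ g := PowerSeries.X_pow_dvd_iff.mpr hM
  rw [coeff_E]
  apply Finset.sum_eq_zero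
  intro k hk
  rcases Nat.eq_zero_or_pos k with h0 | h0
  · subst h0
    simp [PowerSeries.coeff_one]
    omega
  · have : (X:ℝ⟦X⟧)^M ∣ g^k := hdvd.trans (dvd_pow_self g (by omega))
    rw [PowerSeries.X_pow_dvd_iff.mp this j hjM]
    simp

lemma coeff_mul_order {u v : ℝ⟦X⟧} {n : ℕ} (hv : ∀ j ≤ n, coeff j v = 0) :
    coeff n (u * v) = 0 := by
  rw [PowerSeries.coeff_mul]
  apply Finset.sum_eq_zero
  intro p hp
  rw [Finset.HasAntidiagonal.mem_antidiagonal] at hp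
  rw [hv p.2 (by omega), mul_zero]

section Abstract

variable {q : ℝ⟦X⟧} {r : ℝ}

/-- The series `A = q ∘ w` given by its explicit (Lagrange) coefficients. -/
noncomputable def Aq (q : ℝ⟦X⟧) (r : ℝ) : ℝ⟦X⟧ :=
  PowerSeries.mk fun m =>
    if m = 0 then 0 else coeff m (E ((((m:ℕ):ℝ) * r) • q)) / (((m:ℕ):ℝ) * r)

lemma constantCoeff_Aq : constantCoeff (Aq q r) = 0 := by
  rw [← PowerSeries.coeff_zero_eq_constantCoeff_apply, Aq, PowerSeries.coeff_mk, if_pos rfl]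

lemma coeff_Aq {m : ℕ} (hm : 0 < m) :
    coeff m (Aq q r) = coeff m (E ((((m:ℕ):ℝ) * r) • q)) / (((m:ℕ):ℝ) * r) := by
  rw [Aq, PowerSeries.coeff_mk, if_neg (by omega)]

lemma Aq_eq (hq : constantCoeff q = 0) (hr : r ≠ 0) :
    Aq q r = comp q (X * E (r • Aq q r)) := by
  set A := Aq q r with hA_def
  have hA0 : constantCoeff A = 0 := constantCoeff_Aq
  set w := X * E (r • A) with hw_def
  have hw : constantCoeff w = 0 := constantCoeff_w r A
  ext m
  induction m using Nat.strong_induction_on with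
  | _ m ih =>
    rcases Nat.eq_zero_or_pos m with hm | hm
    · subst hm
      rw [PowerSeries.coeff_zero_eq_constantCoeff_apply,
        PowerSeries.coeff_zero_eq_constantCoeff_apply, hA0, constantCoeff_comp', hq]
    · have hmr : ((m:ℕ):ℝ) * r ≠ 0 := by
        apply mul_ne_zero _ hr
        exact_mod_cast (by omega : m ≠ 0)
      -- the difference B has zero coefficients below m
      set B := comp q w - A with hB_def
      have hB : ∀ i < m, coeff i B = 0 := by
        intro i hi
        rw [hB_def, map_sub, ← ih i hi, sub_self]
      -- apply CV
      set P := D q * E ((((m:ℕ):ℝ) * r) • q) with hP_def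
      have hcast : ((m-1:ℕ):ℝ) + 1 = (m:ℝ) := by
        rw [Nat.cast_sub (by omega)]
        push_cast
        ring
      have hCV := CV hA0 hr (m-1) P
      rw [hcast] at hCV
      -- identify comp P w
      have hsm : constantCoeff (((((m:ℕ):ℝ)) * r) • q) = 0 := constantCoeff_smul _ hq
      have hPw : comp P w = comp (D q) w * E ((((m:ℕ):ℝ) * r) • comp q w) := by
        rw [hP_def, comp_mul hw, E_comp hsm hw, comp_smul]
      -- combine the exponentials
      have harg : (((m:ℕ):ℝ) * r) • comp q w + (-(((m:ℝ)) * r)) • A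
          = (((m:ℕ):ℝ) * r) • B := by
        rw [hB_def, smul_sub]
        module
      have hEE : E ((((m:ℕ):ℝ) * r) • comp q w) * E ((-(((m:ℝ)) * r)) • A)
          = E ((((m:ℕ):ℝ) * r) • B) := by
        rw [← E_add (constantCoeff_smul _ (by rw [constantCoeff_comp', hq]))
          (constantCoeff_smul _ hA0), harg]
      have hsplit : comp P w * (D w * E ((-(((m:ℝ)) * r)) • A))
          = comp (D q) w * D w * E ((((m:ℕ):ℝ) * r) • B) := by
        rw [hPw, ← hEE]
        ring
      rw [hsplit] at hCV
      -- strip the E(mrB) factor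
      have hEB : ∀ j ≤ m-1, coeff j (E ((((m:ℕ):ℝ) * r) • B) - 1) = 0 := by
        intro j hj
        rcases Nat.eq_zero_or_pos j with h0 | h0
        · subst h0
          rw [map_sub, PowerSeries.coeff_zero_eq_constantCoeff_apply,
            PowerSeries.coeff_zero_eq_constantCoeff_apply, constantCoeff_E, map_one, sub_self]
        · rw [map_sub, coeff_E_order (M := m) _ h0 (by omega), PowerSeries.coeff_one,
            if_neg (by omega), sub_zero]
          intro i hi
          rw [PowerSeries.coeff_smul, hB i hi, smul_zero]
      have hstrip : coeff (m-1) (comp (D q) w * D w * E ((((m:ℕ):ℝ) * r) • B))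
          = coeff (m-1) (comp (D q) w * D w) := by
        have : comp (D q) w * D w * E ((((m:ℕ):ℝ) * r) • B)
            = comp (D q) w * D w + (comp (D q) w * D w) * (E ((((m:ℕ):ℝ) * r) • B) - 1) := by
          ring
        rw [this, map_add, coeff_mul_order hEB, add_zero]
      rw [hstrip] at hCV
      -- left side is the derivative of comp q w
      have hL : coeff (m-1) (comp (D q) w * D w) = (m:ℝ) * coeff m (comp q w) := by
        rw [← D_comp hw, coeff_D_pred hm]
      -- right side
      have hR : coeff (m-1) P
          = ((((m:ℕ):ℝ)) * r)⁻¹ * ((m:ℝ) * coeff m (E ((((m:ℕ):ℝ) * r) • q))) := by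
        rw [hP_def]
        have hADE : D q * E ((((m:ℕ):ℝ) * r) • q)
            = ((((m:ℕ):ℝ)) * r)⁻¹ • D (E ((((m:ℕ):ℝ) * r) • q)) := by
          rw [D_E_smul _ hq, smul_smul, inv_mul_cancel₀ hmr, one_smul]
        rw [hADE, PowerSeries.coeff_smul, smul_eq_mul, coeff_D_pred hm]
      rw [hL, hR] at hCV
      rw [coeff_Aq hm]
      have hm' : (m:ℝ) ≠ 0 := by exact_mod_cast (by omega : m ≠ 0)
      have h2 : (m:ℝ) * coeff m (comp q w)
          = (m:ℝ) * (coeff m (E ((((m:ℕ):ℝ) * r) • q)) / (((m:ℕ):ℝ) * r)) := by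
        rw [hCV]
        field_simp
      rw [mul_left_cancel₀ hm' h2]

lemma main_coeff (hq : constantCoeff q = 0) (hr : r ≠ 0) (s : ℝ) {n : ℕ} (hn : 0 < n)
    (hR : (n:ℝ) * r + s ≠ 0) :
    coeff n (E (s • Aq q r))
      = (s / ((n:ℝ) * r + s)) * coeff n (E ((((n:ℝ) * r + s)) • q)) := by
  set A := Aq q r with hA_def
  have hA0 : constantCoeff A = 0 := constantCoeff_Aq
  set w := X * E (r • A) with hw_def
  have hw : constantCoeff w = 0 := constantCoeff_w r A
  set R : ℝ := (n:ℝ) * r + s with hR_def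
  set P := D q * E (R • q) with hP_def
  have hcast : ((n-1:ℕ):ℝ) + 1 = (n:ℝ) := by
    rw [Nat.cast_sub (by omega)]
    push_cast
    ring
  have hCV := CV hA0 hr (n-1) P
  rw [hcast] at hCV
  have hsR : constantCoeff (R • q) = 0 := constantCoeff_smul _ hq
  have hPw : comp P w = comp (D q) w * E (R • A) := by
    rw [hP_def, comp_mul hw, E_comp hsR hw, comp_smul, ← Aq_eq hq hr]
  have harg : R • A + (-((n:ℝ) * r)) • A = s • A := by
    rw [hR_def]
    module
  have hEs : E (s • A) = E (R • A) * E ((-((n:ℝ) * r)) • A) := by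
    rw [← E_add (constantCoeff_smul _ hA0) (constantCoeff_smul _ hA0), harg]
  have hDA : D A = comp (D q) w * D w := by
    rw [hA_def]
    nth_rewrite 1 [Aq_eq hq hr]
    rw [D_comp hw]
  have hDE : coeff (n-1) (D (E (s • A))) = s * coeff (n-1) (comp P w * (D w * E ((-((n:ℝ) * r)) • A))) := by
    rw [D_E_smul s hA0, PowerSeries.coeff_smul, smul_eq_mul]
    congr 1
    rw [hDA, hEs, hPw]
    ring
  rw [hCV] at hDE
  have hRP : coeff (n-1) P = R⁻¹ * ((n:ℝ) * coeff n (E (R • q))) := by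
    rw [hP_def]
    have hADE : D q * E (R • q) = R⁻¹ • D (E (R • q)) := by
      rw [D_E_smul _ hq, smul_smul, inv_mul_cancel₀ hR, one_smul]
    rw [hADE, PowerSeries.coeff_smul, smul_eq_mul, coeff_D_pred hn]
  rw [hRP] at hDE
  rw [coeff_D_pred hn] at hDE
  have hn' : (n:ℝ) ≠ 0 := by exact_mod_cast (by omega : n ≠ 0)
  have h2 : (n:ℝ) * coeff n (E (s • A))
      = (n:ℝ) * (s / R * coeff n (E (R • q))) := by
    rw [hDE]
    ring
  exact mul_left_cancel₀ hn' h2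

end Abstract
section Concrete

variable (α β t : ℝ)

noncomputable def Vb (β : ℝ) : ℝ⟦X⟧ := X * rescale β (PowerSeries.exp ℝ)

noncomputable def qs (α β t : ℝ) : ℝ⟦X⟧ := α • (X:ℝ⟦X⟧) + t • Vb β

lemma constantCoeff_Vb : constantCoeff (Vb β) = 0 := by
  rw [Vb, map_mul, PowerSeries.constantCoeff_X, zero_mul]

lemma constantCoeff_qs : constantCoeff (qs α β t) = 0 := by
  rw [qs, map_add, constantCoeff_smul α PowerSeries.constantCoeff_X,
    constantCoeff_smul t (constantCoeff_Vb β), add_zero]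

lemma coeff_E_cX (c : ℝ) (i : ℕ) :
    coeff i (E (c • (X:ℝ⟦X⟧))) = c^i / (Nat.factorial i : ℝ) := by
  rw [coeff_E]
  have h1 : ∀ k ∈ range (i+1), coeff i ((c • (X:ℝ⟦X⟧))^k) / (Nat.factorial k : ℝ)
      = if k = i then c^i / (Nat.factorial i : ℝ) else 0 := by
    intro k _
    rw [smul_pow, PowerSeries.coeff_smul, PowerSeries.coeff_X_pow, smul_eq_mul]
    rcases eq_or_ne k i with h | h
    · subst h; simp
    · rw [if_neg (fun h' => h h'.symm), if_neg h, mul_zero, zero_div]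
  rw [Finset.sum_congr rfl h1, Finset.sum_ite_eq' (range (i+1)) i,
    if_pos (Finset.mem_range.mpr (by omega))]

lemma Vb_pow (k : ℕ) : (Vb β)^k = X^k * rescale ((k:ℝ) * β) (PowerSeries.exp ℝ) := by
  rw [Vb, mul_pow, ← map_pow, PowerSeries.exp_pow_eq_rescale_exp, PowerSeries.rescale_rescale]

lemma coeff_rescale_exp (a : ℝ) (n : ℕ) :
    coeff n (rescale a (PowerSeries.exp ℝ)) = a^n / (Nat.factorial n : ℝ) := by
  rw [PowerSeries.coeff_rescale, PowerSeries.coeff_exp]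
  have : (algebraMap ℚ ℝ) (1 / (Nat.factorial n : ℚ)) = 1 / (Nat.factorial n : ℝ) := by
    push_cast
    simp
  rw [this]
  ring

lemma coeff_Vb_pow {k j : ℕ} (hk : k ≤ j) :
    coeff j ((Vb β)^k) = ((k:ℝ) * β)^(j-k) / (Nat.factorial (j-k) : ℝ) := by
  rw [Vb_pow, coeff_X_pow_mul_le _ hk, coeff_rescale_exp]

lemma coeff_E_cV (c : ℝ) (j : ℕ) :
    coeff j (E (c • Vb β))
      = ∑ k ∈ range (j+1), c^k * ((k:ℝ) * β)^(j-k)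
          / ((Nat.factorial (j-k) : ℝ) * (Nat.factorial k : ℝ)) := by
  rw [coeff_E]
  apply Finset.sum_congr rfl
  intro k hk
  rw [Finset.mem_range] at hk
  rw [smul_pow, PowerSeries.coeff_smul, coeff_Vb_pow β (by omega), smul_eq_mul]
  field_simp

lemma tri_swap (N : ℕ) (f : ℕ → ℕ → ℝ) :
    ∑ i ∈ range (N+1), ∑ k ∈ range (N+1-i), f i k
      = ∑ k ∈ range (N+1), ∑ i ∈ range (N+1-k), f i k := by
  have pad : ∀ g : ℕ → ℕ → ℝ, ∀ i, i ≤ N →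
      ∑ k ∈ range (N+1-i), g i k = ∑ k ∈ range (N+1), if i + k ≤ N then g i k else 0 := by
    intro g i hi
    rw [← Finset.sum_subset (Finset.range_subset_range.mpr (by omega : N+1-i ≤ N+1))
      (fun k hk hk2 => by
        rw [Finset.mem_range] at hk
        rw [Finset.mem_range, not_lt] at hk2
        rw [if_neg (by omega)])]
    apply Finset.sum_congr rfl
    intro k hk
    rw [Finset.mem_range] at hk
    rw [if_pos (by omega)]
  have h1 : ∀ i ∈ range (N+1), ∑ k ∈ range (N+1-i), f i k
      = ∑ k ∈ range (N+1), if i + k ≤ N then f i k else 0 := fun i hi =>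
    pad f i (by rw [Finset.mem_range] at hi; omega)
  rw [Finset.sum_congr rfl h1, Finset.sum_comm]
  apply Finset.sum_congr rfl
  intro k hk
  rw [Finset.mem_range] at hk
  rw [pad (fun k i => f i k) k (by omega)]
  apply Finset.sum_congr rfl
  intro i _
  rw [add_comm k i]

lemma choose_formula {n k i : ℕ} (hk : k ≤ n) (hi : i ≤ n - k) :
    (Nat.factorial n : ℝ)
      = (n.choose k : ℝ) * ((n-k).choose i : ℝ) * (Nat.factorial k : ℝ)
        * (Nat.factorial i : ℝ) * (Nat.factorial (n-k-i) : ℝ) := by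
  have h1 := Nat.choose_mul_factorial_mul_factorial hk
  have h2 := Nat.choose_mul_factorial_mul_factorial hi
  have : n.choose k * (Nat.factorial k) * ((n-k).choose i * Nat.factorial i * Nat.factorial (n-k-i)) = Nat.factorial n := by
    rw [h2, ← h1]
  calc (Nat.factorial n : ℝ)
      = ((n.choose k * (Nat.factorial k) * ((n-k).choose i * Nat.factorial i * Nat.factorial (n-k-i)) : ℕ) : ℝ) := by rw [this]
    _ = _ := by push_cast; ring

lemma coeff_E_qs (lam : ℝ) (n : ℕ) :
    (Nat.factorial n : ℝ) * coeff n (E (lam • qs α β t))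
      = ∑ j ∈ range (n+1),
          (n.choose j : ℝ) * (β * j + α * lam)^(n-j) * lam^j * t^j := by
  have hsplit : lam • qs α β t = (lam * α) • (X:ℝ⟦X⟧) + (lam * t) • Vb β := by
    rw [qs, smul_add, smul_smul, smul_smul]
  rw [hsplit, E_add (constantCoeff_smul _ PowerSeries.constantCoeff_X)
      (constantCoeff_smul _ (constantCoeff_Vb β)), PowerSeries.coeff_mul,
    Finset.Nat.sum_antidiagonal_eq_sum_range_succ_mk]
  have h1 : ∀ i ∈ range (n+1),
      coeff i (E ((lam * α) • (X:ℝ⟦X⟧))) * coeff (n-i) (E ((lam * t) • Vb β))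
        = ∑ k ∈ range (n+1-i), (lam*α)^i / (Nat.factorial i : ℝ)
            * ((lam*t)^k * ((k:ℝ) * β)^(n-i-k)
              / ((Nat.factorial (n-i-k) : ℝ) * (Nat.factorial k : ℝ))) := by
    intro i hi
    rw [Finset.mem_range] at hi
    rw [coeff_E_cX, coeff_E_cV, Finset.mul_sum]
    have : n - i + 1 = n + 1 - i := by omega
    rw [this]
  rw [Finset.sum_congr rfl h1, Finset.mul_sum]
  have h2 : ∀ i ∈ range (n+1), (Nat.factorial n : ℝ) *
      ∑ k ∈ range (n+1-i), (lam*α)^i / (Nat.factorial i : ℝ)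
            * ((lam*t)^k * ((k:ℝ) * β)^(n-i-k)
              / ((Nat.factorial (n-i-k) : ℝ) * (Nat.factorial k : ℝ)))
      = ∑ k ∈ range (n+1-i), (Nat.factorial n : ℝ) * ((lam*α)^i / (Nat.factorial i : ℝ)
            * ((lam*t)^k * ((k:ℝ) * β)^(n-i-k)
              / ((Nat.factorial (n-i-k) : ℝ) * (Nat.factorial k : ℝ)))) :=
    fun i _ => Finset.mul_sum _ _ _
  rw [Finset.sum_congr rfl h2, tri_swap]
  apply Finset.sum_congr rfl
  intro k hk
  rw [Finset.mem_range] at hk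
  have hbin : (β * (k:ℝ) + α * lam)^(n-k)
      = ∑ i ∈ range (n-k+1), (β*(k:ℝ))^i * (α*lam)^(n-k-i) * (((n-k).choose i : ℕ) : ℝ) :=
    add_pow (β * (k:ℝ)) (α * lam) (n-k)
  have hrng : n + 1 - k = n - k + 1 := by omega
  rw [hrng, hbin, Finset.mul_sum, Finset.sum_mul, Finset.sum_mul]
  rw [← Finset.sum_range_reflect (fun i => ((n.choose k : ℕ) : ℝ) *
      ((β*(k:ℝ))^i * (α*lam)^(n-k-i) * (((n-k).choose i : ℕ) : ℝ)) * lam ^ k * t ^ k) (n-k+1)]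
  apply Finset.sum_congr rfl
  intro j hj
  rw [Finset.mem_range] at hj
  beta_reduce
  have e1 : n - k + 1 - 1 - j = n - k - j := by omega
  rw [e1]
  have e2 : n - j - k = n - k - j := by omega
  rw [e2]
  have e3 : n - k - (n - k - j) = j := by omega
  rw [e3]
  have hcf := choose_formula (show k ≤ n by omega) (show n - k - j ≤ n - k by omega)
  rw [e3] at hcf
  rw [hcf]
  have hfacs : (Nat.factorial (n-k-j) : ℝ) ≠ 0 := by positivity
  have hfacj : (Nat.factorial j : ℝ) ≠ 0 := by positivity
  have hfack : (Nat.factorial k : ℝ) ≠ 0 := by positivity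
  field_simp
  ring

end Concrete
end LIF

namespace LIF
open PowerSeries

lemma bellA_eq_E {n : ℕ} (hn : 1 ≤ n) (x : ℕ → ℝ) :
    bellA n x = (Nat.factorial n : ℝ) * coeff n
      (E (PowerSeries.mk fun m => if m = 0 then 0 else x m / (Nat.factorial m : ℝ))) := by
  set g : ℝ⟦X⟧ := PowerSeries.mk fun m => if m = 0 then 0 else x m / (Nat.factorial m : ℝ)
    with hg_def
  rw [bellA, if_neg (by omega), coeff_E, Finset.mul_sum, Finset.sum_range_succ']
  have h0 : (Nat.factorial n : ℝ) * (coeff n (g ^ 0) / (Nat.factorial 0 : ℝ)) = 0 := by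
    rw [pow_zero, PowerSeries.coeff_one, if_neg (by omega)]
    simp
  rw [h0, add_zero]
  have hIcc : Finset.Icc 1 n = Finset.Ico 1 (n+1) := by
    rw [Finset.Ico_add_one_right_eq_Icc]
  rw [hIcc, Finset.sum_Ico_eq_sum_range]
  rw [show n + 1 - 1 = n by omega]
  apply Finset.sum_congr rfl
  intro k _
  rw [bellB]
  rw [show 1 + k = k + 1 by omega]
  field_simp
  rfl


lemma Z18_repr (r : ℕ) (α β t : ℝ) (n s : ℕ) :
    Z18 r α β t n s = (1 / (((n*r+s:ℕ)):ℝ)) *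
      ((Nat.factorial n : ℝ) * coeff n (E ((((n*r+s:ℕ):ℝ)) • qs α β t))) := by
  rw [Z18, coeff_E_qs]

lemma g_eq_sAq (r : ℕ) (hr : 1 ≤ r) (α β t : ℝ) (s : ℕ) :
    (PowerSeries.mk fun m => if m = 0 then 0
        else (s : ℝ) * Z18 r α β t m 0 / (Nat.factorial m : ℝ))
      = (s:ℝ) • Aq (qs α β t) ((r:ℕ):ℝ) := by
  have hrr : ((r:ℕ):ℝ) ≠ 0 := by
    have : (0:ℝ) < ((r:ℕ):ℝ) := by exact_mod_cast (by omega : 0 < r)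
    exact ne_of_gt this
  ext m
  rw [PowerSeries.coeff_mk, PowerSeries.coeff_smul, smul_eq_mul]
  rcases Nat.eq_zero_or_pos m with h0 | hm
  · subst h0
    rw [if_pos rfl, PowerSeries.coeff_zero_eq_constantCoeff_apply, constantCoeff_Aq, mul_zero]
  · rw [if_neg (by omega), coeff_Aq hm, Z18_repr]
    have hc : ((m*r+0:ℕ):ℝ) = ((m:ℕ):ℝ) * ((r:ℕ):ℝ) := by push_cast; ring
    rw [hc]
    have hm' : ((m:ℕ):ℝ) ≠ 0 := by exact_mod_cast (by omega : m ≠ 0)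
    have hfn : (Nat.factorial m : ℝ) ≠ 0 := by positivity
    field_simp

end LIF

theorem stmt_18 (r : ℕ) (hr : 1 ≤ r) (α β t : ℝ) (n s : ℕ) (hn : 1 ≤ n) (hs : 1 ≤ s) :
    bellA n (fun m => (s : ℝ) * Z18 r α β t m 0) = (s : ℝ) * Z18 r α β t n s := by
  have hq := LIF.constantCoeff_qs α β t
  have hrr : ((r:ℕ):ℝ) ≠ 0 := by
    have : (0:ℝ) < ((r:ℕ):ℝ) := by exact_mod_cast (by omega : 0 < r)
    exact ne_of_gt this
  have hR : ((n:ℕ):ℝ) * ((r:ℕ):ℝ) + ((s:ℕ):ℝ) ≠ 0 := by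
    have h1 : (0:ℝ) < ((n:ℕ):ℝ) * ((r:ℕ):ℝ) := by
      have : (0:ℝ) < ((n:ℕ):ℝ) := by exact_mod_cast (by omega : 0 < n)
      have h2 : (0:ℝ) < ((r:ℕ):ℝ) := by exact_mod_cast (by omega : 0 < r)
      positivity
    have h2 : (0:ℝ) ≤ ((s:ℕ):ℝ) := by positivity
    linarith
  rw [LIF.bellA_eq_E hn, LIF.g_eq_sAq r hr α β t s,
    LIF.main_coeff hq hrr ((s:ℕ):ℝ) (by omega : 0 < n) hR, LIF.Z18_repr]
  have hc : ((n*r+s:ℕ):ℝ) = ((n:ℕ):ℝ) * ((r:ℕ):ℝ) + ((s:ℕ):ℝ) := by push_cast; ring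
  rw [hc]
  field_simp
end
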